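/- Let μ > p with p ∈ ℕ, μ non-integer, m = ⌈μ⌉, ν = m - μ, f defined on ℕ_a, a ∈ ℤ⁺. Then for all t ∈ ℕ_{a+m-p}: Δ^p f(t) = ∑_{k=p}^{m-1} ((t-a)^(k-p)/(k-p)!)·Δ^k f(a) + (1/Γ(μ-p))·∑_{s=a+ν}^{t-μ+p} (t-s-1)^(μ-p-1)·Δ_*^μ f(s). -/

import Mathlib

open Finset

/-- Generalized falling factorial `t^(α) = Γ(t+1)/Γ(t-α+1)`. -/
noncomputable def gff (t α : ℝ) : ℝ := Real.Gamma (t + 1) / Real.Gamma (t - α + 1)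

/-- Forward difference operator `Δf(t) = f(t+1) - f(t)`. -/
def fdiff (f : ℝ → ℝ) : ℝ → ℝ := fun t => f (t + 1) - f t

/-- The ν-th fractional sum with base point `a`:
`Δ^{-ν} f(t) = (1/Γ(ν)) ∑_{s=a}^{t-ν} (t-s-1)^(ν-1) f(s)`, the sum running over
`s = a, a+1, ..., t-ν` (for `t ∈ ℕ_{a+ν}`, there are `t-ν-a+1` terms). -/
noncomputable def fsum (ν a : ℝ) (f : ℝ → ℝ) (t : ℝ) : ℝ :=
  (1 / Real.Gamma ν) *
    ∑ j ∈ Finset.range ((⌊t - ν - a⌋).toNat + 1),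
      gff (t - (a + j) - 1) (ν - 1) * f (a + j)

/-- The Caputo-like fractional difference `Δ_*^μ f = Δ^{-(⌈μ⌉-μ)} (Δ^{⌈μ⌉} f)`. -/
noncomputable def caputo (μ a : ℝ) (f : ℝ → ℝ) : ℝ → ℝ :=
  fsum ((⌈μ⌉₊ : ℝ) - μ) a (fdiff^[⌈μ⌉₊] f)

lemma fdiff_eq : fdiff = fwdDiff (1:ℝ) := rfl

lemma newton (f : ℝ → ℝ) (y : ℝ) (n : ℕ) :
    f (y + n) = ∑ k ∈ range (n+1), (n.choose k : ℝ) * fdiff^[k] f y := by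
  have := shift_eq_sum_fwdDiff_iter (1:ℝ) f n y
  simp only [nsmul_eq_mul, mul_one, smul_eq_mul] at this
  rw [fdiff_eq]
  exact this

lemma taylor_base (g : ℝ → ℝ) (a : ℝ) (j : ℕ) :
    g (a + 1 + j) = g a + ∑ s ∈ range (j+1), fdiff g (a + s) := by
  induction j with
  | zero => simp [fdiff]
  | succ j ih =>
    rw [sum_range_succ, ← add_assoc, ← ih]
    have : a + 1 + (↑(j+1) : ℝ) = (a + 1 + j) + 1 := by push_cast; ring
    rw [this]
    simp [fdiff]
    ring_nf

lemma taylor_int (Q : ℕ) : ∀ (g : ℝ → ℝ) (a : ℝ) (j : ℕ),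
    g (a + (Q+1) + j) =
      (∑ r ∈ range (Q+1), (((Q+1+j).choose r : ℕ) : ℝ) * fdiff^[r] g a) +
        ∑ s ∈ range (j+1), (((Q + (j-s)).choose (j-s) : ℕ) : ℝ) * fdiff^[Q+1] g (a+s) := by
  induction Q with
  | zero =>
    intro g a j
    have harg : a + (((0:ℕ):ℝ)+1) + j = a + 1 + j := by norm_num
    rw [harg, taylor_base g a j]
    rw [sum_range_one]
    simp [Nat.choose_self]
  | succ Q ih =>
    intro g a j
    induction j with
    | zero =>
      have harg : a + (↑(Q+1)+1) + (0:ℕ) = a + (↑(Q+2) : ℕ) := by push_cast; ring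
      rw [harg, newton g a (Q+2)]
      rw [sum_range_succ]
      simp [Nat.choose_self]
    | succ j ihj =>
      have hsplit : a + (↑(Q+1)+1) + (↑(j+1):ℕ) = (a + (↑(Q+1)+1) + j) + 1 := by
        push_cast; ring
      have hL : g (a + (↑(Q+1)+1) + (↑(j+1):ℕ))
          = g (a + (↑(Q+1)+1) + j) + fdiff g (a + (↑(Q+1)+1) + j) := by
        rw [hsplit]; simp [fdiff]
      -- apply ih to (fdiff g) at j+1
      have hmid : a + (↑Q+1) + (↑(j+1):ℕ) = a + (↑(Q+1)+1) + j := by push_cast; ring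
      have hih := ih (fdiff g) a (j+1)
      rw [hmid] at hih
      simp only [← Function.iterate_succ_apply fdiff] at hih
      have e2 : Q+1+(j+1) = Q+1+1+j := by omega
      rw [e2] at hih
      rw [hL, ihj, hih]
      have key : ∀ N : ℕ, ∑ r ∈ range (Q+1+1), (((N+1).choose r : ℕ) : ℝ) * fdiff^[r] g a
          = ∑ r ∈ range (Q+1+1), ((N.choose r : ℕ) : ℝ) * fdiff^[r] g a
            + ∑ r ∈ range (Q+1), ((N.choose r : ℕ) : ℝ) * fdiff^[r+1] g a := by
        intro N
        rw [sum_range_succ' (fun r => (((N+1).choose r : ℕ) : ℝ) * fdiff^[r] g a) (Q+1),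
          sum_range_succ' (fun r => ((N.choose r : ℕ) : ℝ) * fdiff^[r] g a) (Q+1)]
        simp only [Nat.choose_succ_succ, Nat.cast_add, add_mul, sum_add_distrib,
          Nat.choose_zero_right, Nat.cast_one]
        ring
      have e3 : Q+1+1+(j+1) = (Q+1+1+j)+1 := by omega
      have hA := key (Q+1+1+j)
      rw [← e3] at hA
      have hB : ∑ s ∈ range (j+1+1), (((Q+1+((j+1)-s)).choose ((j+1)-s) : ℕ) : ℝ)
            * fdiff^[Q+1+1] g (a+s)
          = ∑ s ∈ range (j+1), (((Q+1+(j-s)).choose (j-s) : ℕ) : ℝ) * fdiff^[Q+1+1] g (a+s)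
            + ∑ s ∈ range (j+1+1), (((Q+((j+1)-s)).choose ((j+1)-s) : ℕ) : ℝ)
              * fdiff^[Q+1+1] g (a+s) := by
        rw [sum_range_succ (fun s => (((Q+1+((j+1)-s)).choose ((j+1)-s) : ℕ) : ℝ)
              * fdiff^[Q+1+1] g (a+s)) (j+1),
          sum_range_succ (fun s => (((Q+((j+1)-s)).choose ((j+1)-s) : ℕ) : ℝ)
              * fdiff^[Q+1+1] g (a+s)) (j+1)]
        have hterm : ∀ s ∈ range (j+1),
            (((Q+1+((j+1)-s)).choose ((j+1)-s) : ℕ) : ℝ) * fdiff^[Q+1+1] g (a+s)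
            = (((Q+1+(j-s)).choose (j-s) : ℕ) : ℝ) * fdiff^[Q+1+1] g (a+s)
              + (((Q+((j+1)-s)).choose ((j+1)-s) : ℕ) : ℝ) * fdiff^[Q+1+1] g (a+s) := by
          intro s hs
          have hsle : s ≤ j := Nat.lt_succ_iff.mp (mem_range.mp hs)
          have h1 : (j+1)-s = (j-s)+1 := by omega
          have h2 : Q+1+((j-s)+1) = (Q+1+(j-s))+1 := by omega
          have h3 : Q+((j-s)+1) = Q+1+(j-s) := by omega
          rw [h1, h2, h3, Nat.choose_succ_succ]
          push_cast; ring
        rw [sum_congr rfl hterm, sum_add_distrib]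
        simp only [Nat.sub_self, Nat.add_zero, Nat.choose_zero_right, Nat.cast_one]
        ring
      rw [hA, hB]
      ring

noncomputable def asc (x : ℝ) (n : ℕ) : ℝ := ∏ i ∈ range n, (x + i)

lemma asc_succ (x : ℝ) (n : ℕ) : asc x (n+1) = asc x n * (x + n) := prod_range_succ _ _

lemma Gamma_add_nat (x : ℝ) (hx : 0 < x) (n : ℕ) :
    Real.Gamma (x + n) = Real.Gamma x * asc x n := by
  induction n with
  | zero => simp [asc]
  | succ n ih =>
    have hne : x + (n:ℝ) ≠ 0 := by positivity
    rw [show x + ((n+1:ℕ):ℝ) = (x + n) + 1 by push_cast; ring,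
      Real.Gamma_add_one hne, ih, asc_succ]
    ring

lemma vand (α β : ℝ) (n : ℕ) :
    ∑ i ∈ range (n+1), ((n.choose i : ℕ) : ℝ) * asc α i * asc β (n-i) = asc (α+β) n := by
  induction n with
  | zero => simp [asc]
  | succ n ih =>
    have step1 : ∑ i ∈ range (n+1+1), (((n+1).choose i : ℕ) : ℝ) * asc α i * asc β ((n+1)-i)
        = ∑ i ∈ range (n+1), ((n.choose i : ℕ):ℝ) * asc α (i+1) * asc β (n-i)
          + ∑ i ∈ range (n+1+1), ((n.choose i : ℕ):ℝ) * asc α i * asc β ((n+1)-i) := by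
      rw [sum_range_succ' (fun i => (((n+1).choose i : ℕ) : ℝ) * asc α i * asc β ((n+1)-i)) (n+1),
        sum_range_succ' (fun i => ((n.choose i : ℕ) : ℝ) * asc α i * asc β ((n+1)-i)) (n+1)]
      simp only [Nat.choose_succ_succ, Nat.cast_add, add_mul, sum_add_distrib,
        Nat.choose_zero_right, Nat.cast_one, Nat.succ_sub_succ]
      ring
    rw [step1, sum_range_succ (fun i => ((n.choose i : ℕ):ℝ) * asc α i * asc β ((n+1)-i)) (n+1)]
    have hz : ((n.choose (n+1) : ℕ) : ℝ) = 0 := by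
      simp [Nat.choose_eq_zero_of_lt (Nat.lt_succ_self n)]
    rw [hz, zero_mul, zero_mul, add_zero, ← sum_add_distrib]
    have hterm : ∀ i ∈ range (n+1),
        ((n.choose i : ℕ):ℝ) * asc α (i+1) * asc β (n-i)
          + ((n.choose i : ℕ):ℝ) * asc α i * asc β ((n+1)-i)
        = (α+β+n) * (((n.choose i : ℕ):ℝ) * asc α i * asc β (n-i)) := by
      intro i hi
      have hile : i ≤ n := Nat.lt_succ_iff.mp (mem_range.mp hi)
      have h1 : (n+1)-i = (n-i)+1 := by omega
      rw [h1, asc_succ, asc_succ]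
      have h2 : ((n-i:ℕ):ℝ) = (n:ℝ) - i := by
        rw [Nat.cast_sub hile]
      rw [h2]
      ring
    rw [sum_congr rfl hterm, ← mul_sum, ih, asc_succ]
    ring

lemma gvander (α β : ℝ) (hα : 0 < α) (hβ : 0 < β) (n : ℕ) :
    ∑ l ∈ range (n+1), (Real.Gamma (α + (n-l : ℕ)) / (((n-l).factorial : ℕ) : ℝ))
        * (Real.Gamma (β + l) / ((l.factorial : ℕ) : ℝ))
      = Real.Gamma α * Real.Gamma β * asc (α+β) n / ((n.factorial : ℕ) : ℝ) := by
  have cast1 : ∀ l ∈ range (n+1), (Real.Gamma (α + (n-l : ℕ)) / (((n-l).factorial : ℕ) : ℝ))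
        * (Real.Gamma (β + l) / ((l.factorial : ℕ) : ℝ))
      = (Real.Gamma α * Real.Gamma β / ((n.factorial : ℕ) : ℝ)) *
        (((n.choose l : ℕ):ℝ) * asc β l * asc α (n-l)) := by
    intro l hl
    have hle : l ≤ n := Nat.lt_succ_iff.mp (mem_range.mp hl)
    rw [Gamma_add_nat α hα (n-l), Gamma_add_nat β hβ l, Nat.cast_choose ℝ hle]
    have h1 : (((n-l).factorial : ℕ) : ℝ) ≠ 0 := Nat.cast_ne_zero.mpr (Nat.factorial_ne_zero _)
    have h2 : ((l.factorial : ℕ) : ℝ) ≠ 0 := Nat.cast_ne_zero.mpr (Nat.factorial_ne_zero _)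
    have h3 : ((n.factorial : ℕ) : ℝ) ≠ 0 := Nat.cast_ne_zero.mpr (Nat.factorial_ne_zero _)
    field_simp
  rw [sum_congr rfl cast1, ← mul_sum, vand β α n, show β + α = α + β from add_comm _ _]
  ring

lemma asc_nat (Q n : ℕ) : asc ((Q:ℝ)+1) n * ((Q.factorial : ℕ) : ℝ) = (((Q+n).factorial : ℕ) : ℝ) := by
  induction n with
  | zero => simp [asc]
  | succ n ih =>
    rw [asc_succ, show (Q:ℝ)+1+n = ((Q+n+1 : ℕ):ℝ) by push_cast; ring]
    calc asc ((Q:ℝ)+1) n * ((Q+n+1:ℕ):ℝ) * (Q.factorial : ℝ)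
        = (((Q+n+1:ℕ)):ℝ) * (asc ((Q:ℝ)+1) n * (Q.factorial : ℝ)) := by ring
      _ = (((Q+n+1:ℕ)):ℝ) * ((Q+n).factorial : ℝ) := by rw [ih]
      _ = (((Q+(n+1)).factorial : ℕ) : ℝ) := by
          rw [show Q+(n+1) = (Q+n)+1 by omega, Nat.factorial_succ]
          push_cast; ring

lemma asc_choose (Q n : ℕ) :
    asc ((Q:ℝ)+1) n / ((n.factorial : ℕ) : ℝ) = (((Q+n).choose n : ℕ) : ℝ) := by
  rw [Nat.cast_choose ℝ (Nat.le_add_left n Q), show Q+n-n = Q by omega]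
  rw [← asc_nat Q n]
  have h2 : ((n.factorial : ℕ) : ℝ) ≠ 0 := Nat.cast_ne_zero.mpr (Nat.factorial_ne_zero _)
  have h3 : ((Q.factorial : ℕ) : ℝ) ≠ 0 := Nat.cast_ne_zero.mpr (Nat.factorial_ne_zero _)
  field_simp

lemma gff_gamma (x : ℝ) (k : ℕ) :
    gff (x + k - 1) (x - 1) = Real.Gamma (x + k) / ((k.factorial : ℕ) : ℝ) := by
  unfold gff
  rw [show x + k - 1 + 1 = x + k by ring, show x + k - 1 - (x-1) + 1 = (k:ℝ)+1 by ring,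
    Real.Gamma_nat_eq_factorial]

lemma gff_nat (N r : ℕ) (h : r ≤ N) :
    gff N r = ((N.factorial : ℕ) : ℝ) / (((N-r).factorial : ℕ) : ℝ) := by
  unfold gff
  rw [show (N:ℝ) - r + 1 = ((N-r:ℕ):ℝ)+1 by rw [Nat.cast_sub h],
    Real.Gamma_nat_eq_factorial, Real.Gamma_nat_eq_factorial]

lemma sum_tri (n : ℕ) (F : ℕ → ℕ → ℝ) :
    ∑ i ∈ range n, ∑ s ∈ range (i+1), F i s = ∑ s ∈ range n, ∑ i ∈ Ico s n, F i s := by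
  induction n with
  | zero => simp
  | succ n ih =>
    rw [sum_range_succ, ih]
    have h1 : ∀ s ∈ range (n+1), ∑ i ∈ Ico s (n+1), F i s = (∑ i ∈ Ico s n, F i s) + F n s := by
      intro s hs
      rw [Finset.sum_Ico_succ_top (Nat.lt_succ_iff.mp (mem_range.mp hs))]
    rw [sum_congr rfl h1, sum_add_distrib, sum_range_succ (fun s => ∑ i ∈ Ico s n, F i s) n]
    simp


lemma caputo_eval (μ ν : ℝ) (m : ℕ) (hm : m = ⌈μ⌉₊) (hν : ν = m - μ)
    (f : ℝ → ℝ) (a i : ℕ) :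
    caputo μ a f (a + ν + i) =
      (1 / Real.Gamma ν) * ∑ s ∈ range (i+1),
        Real.Gamma (ν + ((i-s : ℕ) : ℝ)) / (((i-s).factorial : ℕ) : ℝ) * fdiff^[m] f (a + s) := by
  unfold caputo fsum
  rw [← hm, ← hν]
  have hfl : (⌊(a : ℝ) + ν + i - ν - a⌋).toNat = i := by
    rw [show (a : ℝ) + ν + i - ν - a = (i : ℝ) by ring]
    simp
  rw [hfl]
  congr 1
  apply sum_congr rfl
  intro s hs
  have hsle : s ≤ i := Nat.lt_succ_iff.mp (mem_range.mp hs)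
  have harg : (a : ℝ) + ν + i - (a + s) - 1 = ν + ((i-s : ℕ) : ℝ) - 1 := by
    rw [Nat.cast_sub hsle]; ring
  rw [harg, gff_gamma]


theorem stmt9 (μ ν : ℝ) (p : ℕ) (hμ : (p : ℝ) < μ) (hni : ∀ n : ℤ, μ ≠ n)
    (m : ℕ) (hm : m = ⌈μ⌉₊) (hν : ν = m - μ) (f : ℝ → ℝ) (a j : ℕ) (t : ℝ)
    (ht : t = a + m - p + j) :
    fdiff^[p] f t =
      (∑ k ∈ Finset.Ico p m,
          gff (t - a) ((k : ℝ) - p) / ((k - p).factorial : ℝ) * fdiff^[k] f a) +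
        (1 / Real.Gamma (μ - p)) *
          ∑ i ∈ Finset.range (j + 1),
            gff (t - (a + ν + i) - 1) (μ - p - 1) * caputo μ a f (a + ν + i) := by
  have hp0 : (0:ℝ) ≤ p := Nat.cast_nonneg p
  have hμ0 : 0 < μ := lt_of_le_of_lt hp0 hμ
  have hmc : μ ≤ (m:ℝ) := by rw [hm]; exact Nat.le_ceil μ
  have hμm : μ ≠ (m:ℝ) := fun h => hni m (by exact_mod_cast h)
  have hν0 : 0 < ν := by
    rw [hν]; have := lt_of_le_of_ne hmc hμm; linarith
  have hpm : p < m := by exact_mod_cast hμ.trans_le hmc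
  have hμp : 0 < μ - p := by linarith
  have hG1 : Real.Gamma (μ - p) ≠ 0 := (Real.Gamma_pos_of_pos hμp).ne'
  have hG2 : Real.Gamma ν ≠ 0 := (Real.Gamma_pos_of_pos hν0).ne'
  obtain ⟨Q, hQ⟩ : ∃ Q, m = p + (Q + 1) := ⟨m - p - 1, by omega⟩
  have hmr : (m:ℝ) = p + Q + 1 := by rw [hQ]; push_cast; ring
  have htt : t = (a:ℝ) + ((Q:ℝ) + 1) + j := by rw [ht, hmr]; ring
  rw [htt, taylor_int Q (fdiff^[p] f) (a:ℝ) j]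
  simp only [← Function.iterate_add_apply fdiff]
  -- first sum
  have hta : (a:ℝ) + ((Q:ℝ)+1) + j - a = ((Q+1+j : ℕ) : ℝ) := by push_cast; ring
  have hfirst : ∑ k ∈ Ico p m, gff ((a:ℝ) + ((Q:ℝ)+1) + (j:ℝ) - a) ((k:ℝ) - p)
        / (((k-p).factorial : ℕ) : ℝ) * fdiff^[k] f a
      = ∑ r ∈ range (Q+1), (((Q+1+j).choose r : ℕ) : ℝ) * fdiff^[r+p] f a := by
    rw [Finset.sum_Ico_eq_sum_range, show m - p = Q+1 by omega]
    apply sum_congr rfl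
    intro r hr
    have hrQ : r ≤ Q := Nat.lt_succ_iff.mp (mem_range.mp hr)
    have h1 : ((p+r : ℕ):ℝ) - p = ((r:ℕ):ℝ) := by push_cast; ring
    have h2 : p + r - p = r := by omega
    rw [hta, h1, h2, gff_nat (Q+1+j) r (by omega),
      Nat.cast_choose ℝ (show r ≤ Q+1+j by omega), show p + r = r + p by omega]
    have hne1 : ((r.factorial : ℕ) : ℝ) ≠ 0 := Nat.cast_ne_zero.mpr (Nat.factorial_ne_zero _)
    have hne2 : (((Q+1+j-r).factorial : ℕ) : ℝ) ≠ 0 :=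
      Nat.cast_ne_zero.mpr (Nat.factorial_ne_zero _)
    field_simp
  -- second sum
  have hsecond : (1 / Real.Gamma (μ - p)) * ∑ i ∈ range (j+1),
        gff ((a:ℝ) + ((Q:ℝ)+1) + (j:ℝ) - ((a:ℝ) + ν + i) - 1) (μ - p - 1)
          * caputo μ a f ((a:ℝ) + ν + i)
      = ∑ s ∈ range (j+1), (((Q+(j-s)).choose (j-s) : ℕ):ℝ) * fdiff^[Q+1+p] f ((a:ℝ)+s) := by
    have hstep : ∀ i ∈ range (j+1),
        gff ((a:ℝ) + ((Q:ℝ)+1) + (j:ℝ) - ((a:ℝ) + ν + i) - 1) (μ - p - 1)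
          * caputo μ a f ((a:ℝ) + ν + i)
        = (1 / Real.Gamma ν) * ∑ s ∈ range (i+1),
            Real.Gamma ((μ - p) + (((j-i:ℕ)):ℝ)) / (((j-i).factorial : ℕ) : ℝ)
              * (Real.Gamma (ν + (((i-s:ℕ)):ℝ)) / (((i-s).factorial : ℕ) : ℝ))
              * fdiff^[m] f ((a:ℝ) + s) := by
      intro i hi
      have hile : i ≤ j := Nat.lt_succ_iff.mp (mem_range.mp hi)
      have harg : (a:ℝ) + ((Q:ℝ)+1) + (j:ℝ) - ((a:ℝ) + ν + i) - 1
          = (μ - p) + (((j-i:ℕ)):ℝ) - 1 := by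
        rw [Nat.cast_sub hile, hν, hmr]; ring
      rw [harg, gff_gamma, caputo_eval μ ν m hm hν f a i]
      simp only [Finset.mul_sum]
      exact sum_congr rfl fun s _ => by ring
    rw [sum_congr rfl hstep, ← Finset.mul_sum, ← mul_assoc,
      sum_tri (j+1) (fun i s =>
        Real.Gamma ((μ - p) + (((j-i:ℕ)):ℝ)) / (((j-i).factorial : ℕ) : ℝ)
          * (Real.Gamma (ν + (((i-s:ℕ)):ℝ)) / (((i-s).factorial : ℕ) : ℝ))
          * fdiff^[m] f ((a:ℝ) + s))]
    have hin : ∀ s ∈ range (j+1),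
        (∑ i ∈ Ico s (j+1),
          Real.Gamma ((μ - p) + (((j-i:ℕ)):ℝ)) / (((j-i).factorial : ℕ) : ℝ)
            * (Real.Gamma (ν + (((i-s:ℕ)):ℝ)) / (((i-s).factorial : ℕ) : ℝ))
            * fdiff^[m] f ((a:ℝ) + s))
        = Real.Gamma (μ - p) * Real.Gamma ν * (((Q+(j-s)).choose (j-s) : ℕ):ℝ)
            * fdiff^[m] f ((a:ℝ) + s) := by
      intro s hs
      have hsle : s ≤ j := Nat.lt_succ_iff.mp (mem_range.mp hs)
      rw [Finset.sum_Ico_eq_sum_range, show j+1-s = (j-s)+1 by omega]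
      have hterm : ∀ l ∈ range ((j-s)+1),
          Real.Gamma ((μ - p) + (((j-(s+l):ℕ)):ℝ)) / (((j-(s+l)).factorial : ℕ) : ℝ)
            * (Real.Gamma (ν + ((((s+l)-s:ℕ)):ℝ)) / ((((s+l)-s).factorial : ℕ) : ℝ))
            * fdiff^[m] f ((a:ℝ) + s)
          = (Real.Gamma ((μ - p) + ((((j-s)-l:ℕ)):ℝ)) / ((((j-s)-l).factorial : ℕ) : ℝ)
            * (Real.Gamma (ν + ((l:ℕ):ℝ)) / ((l.factorial : ℕ) : ℝ)))
            * fdiff^[m] f ((a:ℝ) + s) := by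
        intro l hl
        rw [show j-(s+l) = (j-s)-l by omega, show (s+l)-s = l by omega]
      rw [sum_congr rfl hterm, ← sum_mul, gvander (μ - p) ν hμp hν0 (j-s),
        show μ - p + ν = (Q:ℝ)+1 by rw [hν, hmr]; ring, mul_div_assoc, asc_choose]
    rw [sum_congr rfl hin, Finset.mul_sum]
    apply sum_congr rfl
    intro s hs
    rw [show Q+1+p = m from by omega]
    field_simp
  rw [hfirst, hsecond]
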